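/- For the Tweedie dual cumulant φ_p(μ) = ∫_1^μ (μ−t)/t^p dt, the Csiszár self-duality φ_p(μ) = μ·φ_p(1/μ) for all μ > 0 holds if and only if p = 3/2. More generally, φ_p(μ) = μ·φ_q(1/μ) for all μ > 0 holds if and only if p + q = 3. -/

import Mathlib

open Set MeasureTheory intervalIntegral

lemma tw_integrable {r a b : ℝ} (ha : 0 < a) (hb : 0 < b) :
    IntervalIntegrable (fun t : ℝ => t ^ r) volume a b := by
  apply ContinuousOn.intervalIntegrable
  intro t ht
  have ht0 : 0 < t := lt_of_lt_of_le (lt_min ha hb) ht.1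
  exact (Real.continuousAt_rpow_const t r (Or.inl ht0.ne')).continuousWithinAt

lemma tw_smaf (r : ℝ) {μ : ℝ} (hμ : 0 < μ) :
    StronglyMeasurableAtFilter (fun t : ℝ => t ^ r) (nhds μ) volume := by
  refine ⟨Ioi 0, isOpen_Ioi.mem_nhds hμ, ?_⟩
  refine ContinuousOn.aestronglyMeasurable ?_ measurableSet_Ioi
  intro t ht
  exact (Real.continuousAt_rpow_const t r (Or.inl (ne_of_gt ht))).continuousWithinAt

lemma tw_hasDerivAt_I (r : ℝ) {μ : ℝ} (hμ : 0 < μ) :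
    HasDerivAt (fun u : ℝ => ∫ t in (1:ℝ)..u, t ^ r) (μ ^ r) μ :=
  integral_hasDerivAt_right (tw_integrable one_pos hμ) (tw_smaf r hμ)
    (Real.continuousAt_rpow_const μ r (Or.inl hμ.ne'))


lemma tw_hasDerivAt_Iinv (r : ℝ) {μ : ℝ} (hμ : 0 < μ) :
    HasDerivAt (fun u : ℝ => ∫ t in (1:ℝ)..(1/u), t ^ r) (-(μ ^ (-r - 2))) μ := by
  have h1 : HasDerivAt (fun u : ℝ => 1/u) (-(μ^2)⁻¹) μ := by
    simpa [one_div] using hasDerivAt_inv hμ.ne'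
  have h2 := (tw_hasDerivAt_I r (by positivity : (0:ℝ) < 1/μ)).comp μ h1
  convert h2 using 1
  · rfl
  · rfl
  · rfl
  have hr : μ ^ (-r-2) = (μ^r)⁻¹ * (μ^2)⁻¹ := by
    rw [show -r-2 = (-r) + (-2) by ring, Real.rpow_add hμ, Real.rpow_neg hμ.le,
      Real.rpow_neg hμ.le, show (2:ℝ) = ((2:ℕ):ℝ) by norm_num, Real.rpow_natCast]
  rw [hr, one_div, Real.inv_rpow hμ.le]
  simp [Function.comp]

lemma tw_hasDerivAt_F (p : ℝ) {μ : ℝ} (hμ : 0 < μ) :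
    HasDerivAt (fun u : ℝ => u * (∫ t in (1:ℝ)..u, t ^ (-p)) - ∫ t in (1:ℝ)..u, t ^ (1-p))
      (∫ t in (1:ℝ)..μ, t ^ (-p)) μ := by
  have h := ((hasDerivAt_id μ).mul (tw_hasDerivAt_I (-p) hμ)).sub (tw_hasDerivAt_I (1-p) hμ)
  convert h using 1
  · rfl
  · rfl
  · rfl
  have : μ ^ (1-p) = μ * μ ^ (-p) := by
    rw [show (1:ℝ)-p = 1 + (-p) by ring, Real.rpow_add hμ, Real.rpow_one]
  rw [this]
  simp only [id_eq]
  ring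

lemma tw_hasDerivAt_G (q : ℝ) {μ : ℝ} (hμ : 0 < μ) :
    HasDerivAt (fun u : ℝ => (∫ t in (1:ℝ)..(1/u), t ^ (-q)) - u * ∫ t in (1:ℝ)..(1/u), t ^ (1-q))
      (-(∫ t in (1:ℝ)..(1/μ), t ^ (1-q))) μ := by
  have h := (tw_hasDerivAt_Iinv (-q) hμ).sub
    ((hasDerivAt_id μ).mul (tw_hasDerivAt_Iinv (1-q) hμ))
  convert h using 1
  · rfl
  · rfl
  · rfl
  have h1 : -(-q) - 2 = q - 2 := by ring
  have h2 : -(1-q) - 2 = (q-2) + (-1) := by ring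
  rw [h1, h2, Real.rpow_add hμ, Real.rpow_neg_one]
  field_simp
  simp only [id_eq]
  ring

lemma tw_unique {f g f' g' : ℝ → ℝ} (hf : ∀ μ : ℝ, 0 < μ → HasDerivAt f (f' μ) μ)
    (hg : ∀ μ : ℝ, 0 < μ → HasDerivAt g (g' μ) μ)
    (heq : ∀ μ : ℝ, 0 < μ → f μ = g μ) : ∀ μ : ℝ, 0 < μ → f' μ = g' μ := by
  intro μ hμ
  have hev : f =ᶠ[nhds μ] g := by
    filter_upwards [isOpen_Ioi.mem_nhds hμ] with x hx using heq x hx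
  exact HasDerivAt.unique (hev.hasDerivAt_iff.mp (hf μ hμ)) (hg μ hμ)

lemma tw_const {f : ℝ → ℝ} (hf : ∀ μ : ℝ, 0 < μ → HasDerivAt f 0 μ) {μ : ℝ} (hμ : 0 < μ) :
    f μ = f 1 := by
  refine (convex_Ioi (0:ℝ)).is_const_of_fderivWithin_eq_zero
    (fun x hx => ((hf x hx).differentiableAt).differentiableWithinAt)
    (fun x hx => ?_) hμ (mem_Ioi.2 one_pos)
  rw [fderivWithin_of_isOpen isOpen_Ioi hx, (hf x hx).hasFDerivAt.fderiv]
  ext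
  simp

lemma tw_split (p s : ℝ) {a : ℝ} (ha : 0 < a) :
    (∫ t in (1:ℝ)..a, (s - t) / t ^ p)
      = s * (∫ t in (1:ℝ)..a, t ^ (-p)) - ∫ t in (1:ℝ)..a, t ^ (1-p) := by
  have hcong : EqOn (fun t : ℝ => (s - t) / t ^ p)
      (fun t : ℝ => s * t ^ (-p) - t ^ (1-p)) (uIcc 1 a) := by
    intro t ht
    have ht0 : (0:ℝ) < t := lt_of_lt_of_le (lt_min one_pos ha) ht.1
    have hne : t ^ p ≠ 0 := (Real.rpow_pos_of_pos ht0 p).ne'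
    simp only
    rw [Real.rpow_neg ht0.le, show (1:ℝ)-p = 1 + (-p) by ring, Real.rpow_add ht0,
      Real.rpow_one, Real.rpow_neg ht0.le]
    field_simp
  rw [intervalIntegral.integral_congr hcong,
    intervalIntegral.integral_sub ((tw_integrable one_pos ha).const_mul s)
      (tw_integrable one_pos ha),
    intervalIntegral.integral_const_mul]

lemma tw_master (p q : ℝ) :
    (∀ μ > (0:ℝ), (∫ t in (1:ℝ)..μ, (μ - t) / t ^ p)
        = μ * ∫ t in (1:ℝ)..(1 / μ), (1 / μ - t) / t ^ q) ↔ p + q = 3 := by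
  constructor
  · intro h
    -- rewrite hypothesis in split form
    have h' : ∀ μ : ℝ, 0 < μ →
        (fun u : ℝ => u * (∫ t in (1:ℝ)..u, t ^ (-p)) - ∫ t in (1:ℝ)..u, t ^ (1-p)) μ
          = (fun u : ℝ => (∫ t in (1:ℝ)..(1/u), t ^ (-q))
              - u * ∫ t in (1:ℝ)..(1/u), t ^ (1-q)) μ := by
      intro μ hμ
      have hinv : (0:ℝ) < 1/μ := by positivity
      have := h μ hμ
      rw [tw_split p μ hμ, tw_split q (1/μ) hinv] at this
      simp only
      rw [this]
      field_simp
    have h2 := tw_unique (fun μ hμ => tw_hasDerivAt_F p hμ)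
      (fun μ hμ => tw_hasDerivAt_G q hμ) h'
    have h3 := tw_unique (fun μ hμ => tw_hasDerivAt_I (-p) hμ)
      (fun μ hμ => (tw_hasDerivAt_Iinv (1-q) hμ).neg) h2
    have h4 := h3 2 two_pos
    simp only [neg_neg] at h4
    have h5 : (-p) * Real.log 2 = (-(1-q)-2) * Real.log 2 := by
      rw [← Real.log_rpow two_pos, ← Real.log_rpow two_pos, h4]
    have hlog : Real.log 2 ≠ 0 := by
      have := Real.log_pos (by norm_num : (1:ℝ) < 2)
      exact this.ne'
    have := mul_right_cancel₀ hlog h5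
    linarith
  · intro hpq μ hμ
    have hinv : (0:ℝ) < 1/μ := by positivity
    rw [tw_split p μ hμ, tw_split q (1/μ) hinv]
    -- inner identity : ∫ t^(-p) from 1..μ = -∫ t^(1-q) from 1..(1/μ)
    have hin : ∀ ν : ℝ, 0 < ν →
        (fun u : ℝ => (∫ t in (1:ℝ)..u, t ^ (-p)) + ∫ t in (1:ℝ)..(1/u), t ^ (1-q)) ν = 0 := by
      intro ν hν
      have hz : (fun u : ℝ => (∫ t in (1:ℝ)..u, t ^ (-p))
          + ∫ t in (1:ℝ)..(1/u), t ^ (1-q)) 1 = 0 := by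
        norm_num
      rw [← hz]
      refine tw_const (f := fun u : ℝ => (∫ t in (1:ℝ)..u, t ^ (-p))
          + ∫ t in (1:ℝ)..(1/u), t ^ (1-q)) (fun x hx => ?_) hν
      have h := (tw_hasDerivAt_I (-p) hx).add (tw_hasDerivAt_Iinv (1-q) hx)
      have : x ^ (-p) + -(x ^ (-(1-q)-2)) = 0 := by
        rw [show -(1-q)-2 = -p by linarith]
        ring
      rwa [this] at h
    have hmain : ∀ ν : ℝ, 0 < ν →
        (fun u : ℝ => (u * (∫ t in (1:ℝ)..u, t ^ (-p)) - ∫ t in (1:ℝ)..u, t ^ (1-p))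
          - ((∫ t in (1:ℝ)..(1/u), t ^ (-q)) - u * ∫ t in (1:ℝ)..(1/u), t ^ (1-q))) ν = 0 := by
      intro ν hν
      have hz : (fun u : ℝ => (u * (∫ t in (1:ℝ)..u, t ^ (-p)) - ∫ t in (1:ℝ)..u, t ^ (1-p))
          - ((∫ t in (1:ℝ)..(1/u), t ^ (-q)) - u * ∫ t in (1:ℝ)..(1/u), t ^ (1-q))) 1 = 0 := by
        norm_num
      rw [← hz]
      refine tw_const (f := fun u : ℝ => (u * (∫ t in (1:ℝ)..u, t ^ (-p))
            - ∫ t in (1:ℝ)..u, t ^ (1-p))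
          - ((∫ t in (1:ℝ)..(1/u), t ^ (-q))
            - u * ∫ t in (1:ℝ)..(1/u), t ^ (1-q))) (fun x hx => ?_) hν
      have h := (tw_hasDerivAt_F p hx).sub (tw_hasDerivAt_G q hx)
      have hzero : (∫ t in (1:ℝ)..x, t ^ (-p)) - -(∫ t in (1:ℝ)..(1/x), t ^ (1-q)) = 0 := by
        have := hin x hx
        simp only at this
        linarith
      rwa [hzero] at h
    have := hmain μ hμ
    simp only at this
    have hfs : μ * ((1/μ) * (∫ t in (1:ℝ)..(1/μ), t ^ (-q)) - ∫ t in (1:ℝ)..(1/μ), t ^ (1-q))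
        = (∫ t in (1:ℝ)..(1/μ), t ^ (-q)) - μ * ∫ t in (1:ℝ)..(1/μ), t ^ (1-q) := by
      field_simp
    rw [hfs]
    linarith

theorem tweedie_csiszar_duality :
    (∀ p : ℝ,
      ((∀ μ > (0:ℝ), (∫ t in (1:ℝ)..μ, (μ - t) / t ^ p)
          = μ * ∫ t in (1:ℝ)..(1 / μ), (1 / μ - t) / t ^ p) ↔ p = 3 / 2)) ∧
    (∀ p q : ℝ,
      ((∀ μ > (0:ℝ), (∫ t in (1:ℝ)..μ, (μ - t) / t ^ p)
          = μ * ∫ t in (1:ℝ)..(1 / μ), (1 / μ - t) / t ^ q) ↔ p + q = 3)) := by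
  refine ⟨fun p => ?_, fun p q => tw_master p q⟩
  rw [tw_master p p]
  constructor <;> intro h <;> linarith
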